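/- Let X be a finite pure d-dimensional simplicial complex, 1 ≤ i ≤ d, and let α ∈ C^i(X,F_2) be minimal, i.e. ||α|| = ||[α]||. Then α is locally minimal: for every vertex v, the induced cochain α_v is a minimal cochain in C^{i-1}(X_v,F_2). -/

import Mathlib

open scoped Classical

structure SComplex (V : Type) [DecidableEq V] where
  faces : Finset (Finset V)
  down_closed : ∀ σ ∈ faces, ∀ τ ⊆ σ, τ ∈ faces

namespace SComplex

variable {V : Type} [Fintype V] [DecidableEq V]

/-- The faces of cardinality `n` (i.e. of dimension `n-1`). -/
def K (X : SComplex V) (n : ℕ) : Finset (Finset V) := X.faces.filter fun σ => σ.card = n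

/-- `X` is pure with all facets (maximal faces) of cardinality `D` (dimension `D-1`). -/
def IsPure (X : SComplex V) (D : ℕ) : Prop :=
  X.faces.Nonempty ∧ ∀ σ ∈ X.faces, ∃ τ ∈ X.faces, σ ⊆ τ ∧ τ.card = D

/-- `F₂`-cochains on the faces of cardinality `n` (the space `C^{n-1}(X,F₂)`). -/
abbrev Cochain (X : SComplex V) (n : ℕ) : Type := ↥(X.K n) → ZMod 2

/-- The weight of a face `σ` of cardinality `n`, in a complex with facets of cardinality `D`:
`wt(σ) = c(σ) / (C(D,n) · #facets)` where `c(σ)` is the number of facets containing `σ`. -/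
noncomputable def wt (X : SComplex V) (D n : ℕ) (σ : Finset V) : ℝ :=
  (((X.K D).filter fun τ => σ ⊆ τ).card : ℝ) / ((D.choose n : ℝ) * ((X.K D).card : ℝ))

/-- The norm `‖α‖ = Σ_{σ : α(σ)≠0} wt(σ)` of a cochain. -/
noncomputable def cnorm (X : SComplex V) (D n : ℕ) (α : X.Cochain n) : ℝ :=
  ∑ σ ∈ (X.K n).attach, if α σ ≠ 0 then X.wt D n σ.1 else 0

/-- The coboundary map into level `n` (from cochains on faces of cardinality `n-1`). -/
def delta (X : SComplex V) (n : ℕ) (γ : X.Cochain (n - 1)) : X.Cochain n :=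
  fun τ => ∑ σ ∈ (X.K (n - 1)).attach, if σ.1 ⊆ τ.1 then γ σ else 0

/-- `α` is a coboundary: `α ∈ B^{n-1}(X,F₂) = Image(δ)`. -/
def IsCobound (X : SComplex V) (n : ℕ) (α : X.Cochain n) : Prop :=
  ∃ γ : X.Cochain (n - 1), X.delta n γ = α

/-- `α` is a cocycle: `α ∈ Z^{n-1}(X,F₂) = Ker(δ)`. -/
def IsCocycle (X : SComplex V) (n : ℕ) (α : X.Cochain n) : Prop :=
  X.delta (n + 1) α = 0

/-- `‖[α]‖ = min{‖γ‖ : γ ∈ α + B}`. -/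
noncomputable def normClassB (X : SComplex V) (D n : ℕ) (α : X.Cochain n) : ℝ :=
  sInf {x : ℝ | ∃ β : X.Cochain n, X.IsCobound n β ∧ x = X.cnorm D n (α + β)}

/-- `‖{α}‖ = min{‖γ‖ : γ ∈ α + Z}`. -/
noncomputable def normClassZ (X : SComplex V) (D n : ℕ) (α : X.Cochain n) : ℝ :=
  sInf {x : ℝ | ∃ β : X.Cochain n, X.IsCocycle n β ∧ x = X.cnorm D n (α + β)}

/-- The coboundary expansion `ε_{n-1}(X)` (for a complex with facets of cardinality `D`). -/
noncomputable def epsExp (X : SComplex V) (D n : ℕ) : ℝ :=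
  sInf {x : ℝ | ∃ α : X.Cochain n, ¬ X.IsCobound n α ∧
    x = X.cnorm D (n + 1) (X.delta (n + 1) α) / X.normClassB D n α}

end SComplex

namespace SComplex

variable {V : Type} [Fintype V] [DecidableEq V]

/-- The link of `X` at a vertex `v`: the faces `σ` with `v ∉ σ` and `σ ∪ {v} ∈ X`. -/
def link (X : SComplex V) (v : V) : SComplex V where
  faces := X.faces.filter fun σ => v ∉ σ ∧ insert v σ ∈ X.faces
  down_closed := by
    intro σ hσ τ hτ
    simp only [Finset.mem_filter] at hσ ⊢
    exact ⟨X.down_closed σ hσ.1 τ hτ, fun h => hσ.2.1 (hτ h),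
      X.down_closed _ hσ.2.2 _ (Finset.insert_subset_insert v hτ)⟩

/-- The cochain `α_v` on the link induced by a cochain `α`: `α_v(σ∖{v}) = α(σ)`. -/
def localize (X : SComplex V) (v : V) (n : ℕ) (α : X.Cochain n) :
    (X.link v).Cochain (n - 1) :=
  fun σ => if h : insert v σ.1 ∈ X.K n then α ⟨insert v σ.1, h⟩ else 0

/-- `α` is minimal: its norm realizes the minimum over its class modulo coboundaries. -/
def IsMinimal (X : SComplex V) (D n : ℕ) (α : X.Cochain n) : Prop :=
  ∀ γ : X.Cochain (n - 1), X.cnorm D n α ≤ X.cnorm D n (α + X.delta n γ)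

/-- `α` is locally minimal: for every vertex `v` the induced cochain `α_v` is a
minimal cochain on the link `X_v` (a pure complex with facets of cardinality `D-1`). -/
def LocallyMinimal (X : SComplex V) (D n : ℕ) (α : X.Cochain n) : Prop :=
  ∀ v : V, (X.link v).IsMinimal (D - 1) (n - 1) (X.localize v n α)

end SComplex

namespace SComplex

variable {V : Type} [Fintype V] [DecidableEq V]

lemma link_K_not_mem {X : SComplex V} {v : V} {n : ℕ} {σ : Finset V}
    (h : σ ∈ (X.link v).K n) : v ∉ σ := by
  simp only [K, link, Finset.mem_filter] at h
  exact h.1.2.1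

lemma erase_mem_link_K (X : SComplex V) (v : V) {n : ℕ} {σ : Finset V}
    (hσ : σ ∈ X.K (n + 1)) (hv : v ∈ σ) : σ.erase v ∈ (X.link v).K n := by
  simp only [K, link, Finset.mem_filter] at hσ ⊢
  refine ⟨⟨X.down_closed σ hσ.1 _ (Finset.erase_subset v σ), Finset.notMem_erase v σ, ?_⟩, ?_⟩
  · rw [Finset.insert_erase hv]
    exact hσ.1
  · rw [Finset.card_erase_of_mem hv, hσ.2]
    omega

lemma insert_mem_K (X : SComplex V) (v : V) {n : ℕ} {σ : Finset V}
    (hσ : σ ∈ (X.link v).K n) : insert v σ ∈ X.K (n + 1) := by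
  simp only [K, link, Finset.mem_filter] at hσ ⊢
  exact ⟨hσ.1.2.2, by rw [Finset.card_insert_of_notMem hσ.1.2.1, hσ.2]⟩

lemma sum_attach_link {M : Type*} [AddCommMonoid M] (X : SComplex V) (v : V) (n : ℕ)
    (f : {x // x ∈ X.K (n + 1)} → M) (g : {x // x ∈ (X.link v).K n} → M)
    (hfg : ∀ (τ : Finset V) (hτ : τ ∈ X.K (n + 1)) (hv : v ∈ τ)
      (hρ : τ.erase v ∈ (X.link v).K n), f ⟨τ, hτ⟩ = g ⟨τ.erase v, hρ⟩) :
    ∑ τ ∈ (X.K (n + 1)).attach.filter (fun τ => v ∈ τ.1), f τ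
      = ∑ ρ ∈ ((X.link v).K n).attach, g ρ := by
  refine Finset.sum_bij'
    (fun τ hτ => (⟨τ.1.erase v, X.erase_mem_link_K v τ.2 (Finset.mem_filter.mp hτ).2⟩ :
      {x // x ∈ (X.link v).K n}))
    (fun ρ _ => (⟨insert v ρ.1, X.insert_mem_K v ρ.2⟩ : {x // x ∈ X.K (n + 1)}))
    (fun τ hτ => Finset.mem_attach _ _) (fun ρ hρ => ?_) (fun τ hτ => ?_) (fun ρ hρ => ?_)
    (fun τ hτ => ?_)
  · exact Finset.mem_filter.mpr ⟨Finset.mem_attach _ _, Finset.mem_insert_self v _⟩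
  · exact Subtype.ext (Finset.insert_erase (Finset.mem_filter.mp hτ).2)
  · exact Subtype.ext (Finset.erase_insert (link_K_not_mem ρ.2))
  · exact hfg τ.1 τ.2 (Finset.mem_filter.mp hτ).2 _

lemma count_link (X : SComplex V) (v : V) (D : ℕ) {τ : Finset V} (hv : v ∈ τ) :
    ((((X.link v).K D).filter fun T => τ.erase v ⊆ T).card : ℝ)
      = (((X.K (D + 1)).filter fun T => τ ⊆ T).card : ℝ) := by
  congr 1
  apply Finset.card_nbij' (fun T => insert v T) (fun T => T.erase v)
  · intro T hT
    simp only [Finset.coe_filter, Set.mem_setOf_eq, Finset.mem_coe, Finset.mem_filter] at hT ⊢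
    refine ⟨X.insert_mem_K v hT.1, ?_⟩
    intro x hx
    rcases eq_or_ne x v with rfl | hxv
    · exact Finset.mem_insert_self _ _
    · exact Finset.mem_insert_of_mem (hT.2 (Finset.mem_erase.mpr ⟨hxv, hx⟩))
  · intro T hT
    simp only [Finset.coe_filter, Set.mem_setOf_eq, Finset.mem_coe, Finset.mem_filter] at hT ⊢
    exact ⟨X.erase_mem_link_K v hT.1 (hT.2 hv), Finset.erase_subset_erase v hT.2⟩
  · intro T hT
    simp only [Finset.coe_filter, Set.mem_setOf_eq, Finset.mem_coe, Finset.mem_filter] at hT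
    exact Finset.erase_insert (link_K_not_mem hT.1)
  · intro T hT
    simp only [Finset.coe_filter, Set.mem_setOf_eq, Finset.mem_coe, Finset.mem_filter] at hT
    exact Finset.insert_erase (hT.2 hv)

lemma localize_apply (X : SComplex V) (v : V) (n : ℕ) (β : X.Cochain (n + 1))
    {τ : Finset V} (hτ : τ ∈ X.K (n + 1)) (hv : v ∈ τ)
    (hρ : τ.erase v ∈ (X.link v).K n) :
    X.localize v (n + 1) β ⟨τ.erase v, hρ⟩ = β ⟨τ, hτ⟩ := by
  have he : insert v (τ.erase v) = τ := Finset.insert_erase hv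
  have h1 : insert v (τ.erase v) ∈ X.K (n + 1) := by rw [he]; exact hτ
  unfold localize
  rw [dif_pos h1]
  exact congrArg β (Subtype.ext he)

/-- Lift a cochain on the link to a cochain on `X` supported on faces containing `v`. -/
def lift (X : SComplex V) (v : V) (n : ℕ) (γ : (X.link v).Cochain n) : X.Cochain (n + 1) :=
  fun σ => if h : v ∈ σ.1 ∧ σ.1.erase v ∈ (X.link v).K n then γ ⟨σ.1.erase v, h.2⟩ else 0

end SComplex

/-- Let `X` be a finite pure `d`-dimensional simplicial complex,
`1 ≤ i ≤ d`, and let `α ∈ C^i(X,F₂)` be minimal (`‖α‖ = ‖[α]‖`).  Then `α` is locally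
minimal: for every vertex `v`, the induced cochain `α_v` is minimal in `C^{i-1}(X_v,F₂)`. -/
theorem minimal_implies_locally_minimal
    {V : Type} [Fintype V] [DecidableEq V] (d i : ℕ) (hd : 1 ≤ d) (hi1 : 1 ≤ i)
    (hid : i ≤ d) (X : SComplex V) (hpure : X.IsPure (d + 1))
    (α : X.Cochain (i + 1)) (hmin : X.IsMinimal (d + 1) (i + 1) α) :
    X.LocallyMinimal (d + 1) (i + 1) α := by
  obtain ⟨j, rfl⟩ : ∃ j, i = j + 1 := ⟨i - 1, (Nat.succ_pred_eq_of_pos hi1).symm⟩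
  intro v
  show (X.link v).IsMinimal d (j + 1) (X.localize v (j + 1 + 1) α)
  intro γ
  by_cases hK : ((X.link v).K (j + 1)) = ∅
  · show (X.link v).cnorm d (j + 1) _ ≤ (X.link v).cnorm d (j + 1) _
    unfold SComplex.cnorm
    have hz : ∀ (f : {x // x ∈ (X.link v).K (j + 1)} → ℝ),
        ∑ σ ∈ ((X.link v).K (j + 1)).attach, f σ = 0 :=
      fun f => Finset.sum_eq_zero
        (fun σ _ => absurd σ.2 (Finset.eq_empty_iff_forall_notMem.mp hK σ.1))
    rw [hz, hz]
  -- positivity of the various counts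
  obtain ⟨σ0, hσ0⟩ := hpure.1
  obtain ⟨T0, hT0, -, hT0c⟩ := hpure.2 σ0 hσ0
  have hN : (0:ℝ) < ((X.K (d + 1)).card : ℝ) := by
    exact_mod_cast Finset.card_pos.mpr ⟨T0, Finset.mem_filter.mpr ⟨hT0, hT0c⟩⟩
  obtain ⟨ρ0, hρ0⟩ := Finset.nonempty_iff_ne_empty.mpr hK
  have h2 : insert v ρ0 ∈ X.faces := (Finset.mem_filter.mp (X.insert_mem_K v hρ0)).1
  obtain ⟨T1, hT1, hsub1, hT1c⟩ := hpure.2 _ h2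
  have hT1K : T1 ∈ X.K (d + 1) := Finset.mem_filter.mpr ⟨hT1, hT1c⟩
  have hvT1 : v ∈ T1 := hsub1 (Finset.mem_insert_self _ _)
  have hL : (0:ℝ) < ((((X.link v).K d).card : ℝ)) := by
    exact_mod_cast Finset.card_pos.mpr ⟨T1.erase v, X.erase_mem_link_K v hT1K hvT1⟩
  have hch1 : (0:ℝ) < (((d + 1).choose (j + 1 + 1) : ℕ) : ℝ) := by
    exact_mod_cast Nat.choose_pos (by omega : j + 1 + 1 ≤ d + 1)
  have hch2 : (0:ℝ) < ((d.choose (j + 1) : ℕ) : ℝ) := by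
    exact_mod_cast Nat.choose_pos (by omega : j + 1 ≤ d)
  set c : ℝ := ((d.choose (j + 1) : ℝ) * (((X.link v).K d).card : ℝ)) /
      (((d + 1).choose (j + 1 + 1) : ℝ) * ((X.K (d + 1)).card : ℝ)) with hc_def
  have hc : 0 < c := div_pos (mul_pos hch2 hL) (mul_pos hch1 hN)
  -- weight proportionality
  have hwt : ∀ (τ : Finset V), v ∈ τ →
      X.wt (d + 1) (j + 1 + 1) τ = c * (X.link v).wt d (j + 1) (τ.erase v) := by
    intro τ hvτ
    unfold SComplex.wt
    rw [X.count_link v d hvτ, hc_def]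
    field_simp
  -- the lifted cochain
  set γ' : X.Cochain (j + 1) := X.lift v j γ with hγ'def
  have hγ'zero : ∀ σ : {x // x ∈ X.K (j + 1)}, v ∉ σ.1 → γ' σ = 0 := by
    intro σ hv'
    rw [hγ'def]
    unfold SComplex.lift
    rw [dif_neg]
    rintro ⟨h1, -⟩
    exact hv' h1
  -- delta vanishes on faces not containing v
  have hδ0 : ∀ τ : {x // x ∈ X.K (j + 1 + 1)}, v ∉ τ.1 → X.delta (j + 1 + 1) γ' τ = 0 := by
    intro τ hvτ
    apply Finset.sum_eq_zero
    intro σ _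
    by_cases hsub : σ.1 ⊆ τ.1
    · rw [if_pos hsub]
      apply hγ'zero
      intro hvσ
      exact hvτ (hsub hvσ)
    · rw [if_neg hsub]
  -- delta commutes with localization
  have hδ1 : ∀ (τ : Finset V) (hτ : τ ∈ X.K (j + 1 + 1)) (hvτ : v ∈ τ)
      (hρ : τ.erase v ∈ (X.link v).K (j + 1)),
      X.delta (j + 1 + 1) γ' ⟨τ, hτ⟩ = (X.link v).delta (j + 1) γ ⟨τ.erase v, hρ⟩ := by
    intro τ hτ hvτ hρ
    show ∑ σ ∈ (X.K (j + 1)).attach, (if σ.1 ⊆ τ then γ' σ else 0)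
        = ∑ σ ∈ ((X.link v).K j).attach, (if σ.1 ⊆ τ.erase v then γ σ else 0)
    rw [← Finset.sum_filter_of_ne (p := fun σ : {x // x ∈ X.K (j + 1)} => v ∈ σ.1)
      (fun σ _ hne => by
        by_contra hv'
        apply hne
        by_cases hsub : σ.1 ⊆ τ
        · rw [if_pos hsub]
          exact hγ'zero σ hv'
        · rw [if_neg hsub])]
    refine X.sum_attach_link v j _ _ ?_
    intro σ hσ hvσ hρ'
    have hiff : σ ⊆ τ ↔ σ.erase v ⊆ τ.erase v := by
      constructor
      · exact fun h => Finset.erase_subset_erase v h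
      · intro h
        have h' := Finset.insert_subset_insert v h
        rwa [Finset.insert_erase hvσ, Finset.insert_erase hvτ] at h'
    by_cases hsub : σ ⊆ τ
    · rw [if_pos hsub, if_pos (hiff.mp hsub), hγ'def]
      unfold SComplex.lift
      rw [dif_pos ⟨hvσ, hρ'⟩]
    · rw [if_neg hsub, if_neg (fun h => hsub (hiff.mpr h))]
  -- norm splitting
  have hvpart : ∀ β : X.Cochain (j + 1 + 1),
      (∑ τ ∈ (X.K (j + 1 + 1)).attach.filter (fun τ => v ∈ τ.1),
        if β τ ≠ 0 then X.wt (d + 1) (j + 1 + 1) τ.1 else 0)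
      = c * (X.link v).cnorm d (j + 1) (X.localize v (j + 1 + 1) β) := by
    intro β
    unfold SComplex.cnorm
    rw [Finset.mul_sum]
    refine X.sum_attach_link v (j + 1) _ _ ?_
    intro τ hτ hvτ hρ
    rw [X.localize_apply v (j + 1) β hτ hvτ hρ]
    by_cases hz : β ⟨τ, hτ⟩ ≠ 0
    · rw [if_pos hz, if_pos hz, hwt τ hvτ]
    · rw [if_neg hz, if_neg hz, mul_zero]
  have hsplit : ∀ β : X.Cochain (j + 1 + 1), X.cnorm (d + 1) (j + 1 + 1) β
      = (∑ τ ∈ (X.K (j + 1 + 1)).attach.filter (fun τ => ¬ v ∈ τ.1),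
          if β τ ≠ 0 then X.wt (d + 1) (j + 1 + 1) τ.1 else 0)
        + c * (X.link v).cnorm d (j + 1) (X.localize v (j + 1 + 1) β) := by
    intro β
    rw [← hvpart β]
    have h := Finset.sum_filter_add_sum_filter_not ((X.K (j + 1 + 1)).attach)
      (fun τ => v ∈ τ.1) (fun τ => if β τ ≠ 0 then X.wt (d + 1) (j + 1 + 1) τ.1 else 0)
    have h2 : X.cnorm (d + 1) (j + 1 + 1) β
        = ∑ τ ∈ (X.K (j + 1 + 1)).attach,
            (if β τ ≠ 0 then X.wt (d + 1) (j + 1 + 1) τ.1 else 0) := rfl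
    rw [h2, ← h]
    exact add_comm _ _
  -- localize of the perturbed cochain
  obtain ⟨αv, hαv⟩ : ∃ a : (X.link v).Cochain (j + 1), X.localize v (j + 1 + 1) α = a := ⟨_, rfl⟩
  have hloc : αv + (X.link v).delta (j + 1) γ
      = X.localize v (j + 1 + 1) (α + X.delta (j + 1 + 1) γ') := by
    funext ρ
    have hρ : ρ.1 ∈ (X.link v).K (j + 1) := ρ.2
    have h1 : insert v ρ.1 ∈ X.K (j + 1 + 1) := X.insert_mem_K v hρ
    have her : (insert v ρ.1).erase v = ρ.1 := Finset.erase_insert (SComplex.link_K_not_mem hρ)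
    have hρ' : (insert v ρ.1).erase v ∈ (X.link v).K (j + 1) := by rw [her]; exact hρ
    have key1 : ∀ β : X.Cochain (j + 1 + 1),
        X.localize v (j + 1 + 1) β ρ = β ⟨insert v ρ.1, h1⟩ := by
      intro β
      unfold SComplex.localize
      rw [dif_pos h1]
    have e2 : X.delta (j + 1 + 1) γ' ⟨insert v ρ.1, h1⟩ = (X.link v).delta (j + 1) γ ρ := by
      rw [hδ1 (insert v ρ.1) h1 (Finset.mem_insert_self v _) hρ']
      exact congrArg _ (Subtype.ext her)
    show αv ρ + (X.link v).delta (j + 1) γ ρ = _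
    rw [key1 (α + X.delta (j + 1 + 1) γ')]
    show _ = α ⟨insert v ρ.1, h1⟩ + X.delta (j + 1 + 1) γ' ⟨insert v ρ.1, h1⟩
    rw [e2, ← congrFun hαv ρ, key1 α]
  -- apply minimality and conclude
  have key := hmin γ'
  rw [hsplit α, hsplit (α + X.delta (j + 1 + 1) γ')] at key
  have hAeq : (∑ τ ∈ (X.K (j + 1 + 1)).attach.filter (fun τ => ¬ v ∈ τ.1),
        if (α + X.delta (j + 1 + 1) γ') τ ≠ 0 then X.wt (d + 1) (j + 1 + 1) τ.1 else 0)
      = (∑ τ ∈ (X.K (j + 1 + 1)).attach.filter (fun τ => ¬ v ∈ τ.1),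
        if α τ ≠ 0 then X.wt (d + 1) (j + 1 + 1) τ.1 else 0) := by
    refine Finset.sum_congr rfl (fun τ hτ => ?_)
    have hz : (α + X.delta (j + 1 + 1) γ') τ = α τ := by
      show α τ + X.delta (j + 1 + 1) γ' τ = α τ
      rw [hδ0 τ (Finset.mem_filter.mp hτ).2, add_zero]
    rw [hz]
  rw [hAeq, ← hloc] at key
  have hkey2 := le_of_mul_le_mul_left ((add_le_add_iff_left _).mp key) hc
  rw [← hαv] at hkey2
  exact hkey2
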